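/- Let β, γ ∈ ℕⁿ and set A_α = sqrt( α!(n-1+|α|)!(n-1+|α+β-γ|)! / ((α+β-γ)!(m+n-1+|α|)!(m+n-1+|α+β-γ|)!) ) · (α+β)!(m+n-1+|α+β|)! / (α!(n-1+|α+β|)!) for α ∈ ℕⁿ with α ≥ γ. Then as α → ∞ (each component tending to infinity), A_α / α^{(β+γ)/2} converges to a positive constant independent of α; in particular A_α is comparable to ∏_j α_j^{(β_j+γ_j)/2}. -/

import Mathlib

open MeasureTheory Filter Finset

noncomputable section

namespace FockSob

/-- squared Euclidean norm on ℂⁿ -/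
def Nsq {n : ℕ} (z : Fin n → ℂ) : ℝ := ∑ j, ‖z j‖ ^ 2

/-- the weight ω_{n,m} |z|^{2m} e^{-|z|²} -/
def wgt (n m : ℕ) (z : Fin n → ℂ) : ℝ :=
  ((n - 1).factorial : ℝ) / (Real.pi ^ n * (m + n - 1).factorial) * Nsq z ^ m * Real.exp (-Nsq z)

/-- the measure dV_m on ℂⁿ -/
def dVm (n m : ℕ) : Measure (Fin n → ℂ) :=
  volume.withDensity fun z => ENNReal.ofReal (wgt n m z)

/-- the monomial z^β z̄^γ -/
def mono {n : ℕ} (β γ : Fin n → ℕ) (z : Fin n → ℂ) : ℂ :=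
  (∏ j, z j ^ β j) * ∏ j, (starRingEnd ℂ) (z j) ^ γ j

/-- the normalized monomial e_α -/
def eFun (n m : ℕ) (α : Fin n → ℕ) (z : Fin n → ℂ) : ℂ :=
  (Real.sqrt (((m + n - 1).factorial * (n - 1 + ∑ j, α j).factorial : ℝ) /
      ((∏ j, (α j).factorial) * (n - 1).factorial * (m + n - 1 + ∑ j, α j).factorial)) : ℝ) *
    ∏ j, z j ^ α j

open scoped Classical in
/-- embedding of a function into L²(dV_m) (zero if not square integrable) -/
def toL2 (n m : ℕ) (f : (Fin n → ℂ) → ℂ) : Lp ℂ 2 (dVm n m) :=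
  if h : MemLp f 2 (dVm n m) then h.toLp f else 0

/-- the basis vector e_α as an element of L²(dV_m) -/
def eL2 (n m : ℕ) (α : Fin n → ℕ) : Lp ℂ 2 (dVm n m) := toL2 n m (eFun n m α)

/-- the Fock–Sobolev space: classes in L²(dV_m) with an entire representative -/
def FSS (n m : ℕ) : Submodule ℂ (Lp ℂ 2 (dVm n m)) where
  carrier := {f | ∃ g : (Fin n → ℂ) → ℂ, Differentiable ℂ g ∧ (⇑f) =ᵐ[dVm n m] g}
  zero_mem' := ⟨0, differentiable_const 0, by
    filter_upwards [Lp.coeFn_zero (E := ℂ) (p := 2) (μ := dVm n m)] with z hz using hz⟩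
  add_mem' := by
    rintro f g ⟨F, hF, hfF⟩ ⟨G, hG, hgG⟩
    exact ⟨F + G, hF.add hG, by
      filter_upwards [Lp.coeFn_add f g, hfF, hgG] with z h1 h2 h3 using by
        rw [h1, Pi.add_apply, h2, h3]; rfl⟩
  smul_mem' := by
    rintro c f ⟨F, hF, hfF⟩
    exact ⟨c • F, hF.const_smul c, by
      filter_upwards [Lp.coeFn_smul c f, hfF] with z h1 h2 using by simp [h1, h2]⟩

/-- the closure of the Fock–Sobolev space in L² -/
def FSSc (n m : ℕ) : Submodule ℂ (Lp ℂ 2 (dVm n m)) := (FSS n m).topologicalClosure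

set_option synthInstance.maxHeartbeats 1000000 in
instance (n m : ℕ) : Submodule.HasOrthogonalProjection (FSSc n m) :=
  haveI : CompleteSpace (FSSc n m) :=
    (FSS n m).isClosed_topologicalClosure.completeSpace_coe
  Submodule.HasOrthogonalProjection.ofCompleteSpace _

set_option synthInstance.maxHeartbeats 1000000 in
/-- the projection P_m -/
def projm (n m : ℕ) : Lp ℂ 2 (dVm n m) →L[ℂ] FSSc n m := Submodule.orthogonalProjectionOnto (FSSc n m)

/-- the Toeplitz operator T_φ (defaulting to 0 where undefined) -/
def Toep (n m : ℕ) (φ : (Fin n → ℂ) → ℂ) (u : Lp ℂ 2 (dVm n m)) : Lp ℂ 2 (dVm n m) :=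
  (projm n m (toL2 n m fun z => φ z * u z) : Lp ℂ 2 (dVm n m))

/-- the Hankel operator H_φ = (I - P_m)(φ ·) -/
def Hank (n m : ℕ) (φ : (Fin n → ℂ) → ℂ) (u : Lp ℂ 2 (dVm n m)) : Lp ℂ 2 (dVm n m) :=
  toL2 n m (fun z => φ z * u z) - Toep n m φ u

/-- polynomials in z and z̄ -/
def IsPolyZZ (n : ℕ) (f : (Fin n → ℂ) → ℂ) : Prop :=
  ∃ c : ((Fin n → ℕ) × (Fin n → ℕ)) →₀ ℂ,
    ∀ z, f z = ∑ p ∈ c.support, c p * mono p.1 p.2 z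

/-- holomorphic polynomials (polynomials in z alone) -/
def IsPolyZ (n : ℕ) (f : (Fin n → ℂ) → ℂ) : Prop :=
  ∃ c : (Fin n → ℕ) →₀ ℂ, ∀ z, f z = ∑ β ∈ c.support, c β * ∏ j, z j ^ β j

/-- product of factorials of a multi-index, as a real number -/
def fprod {n : ℕ} (v : Fin n → ℕ) : ℝ := ∏ j, ((v j).factorial : ℝ)

/-- length |v| of a multi-index -/
def msum {n : ℕ} (v : Fin n → ℕ) : ℕ := ∑ j, v j

/-- the coefficient A_α of Lemma 3.1 -/
def Acoef (n m : ℕ) (β γ μ ν : Fin n → ℕ) (α : Fin n → ℕ) : ℝ :=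
  (fprod (fun j => α j + γ j + μ j) *
        ((m + n - 1 + msum fun j => α j + γ j + μ j).factorial : ℝ) /
      (fprod α * ((n - 1 + msum fun j => α j + γ j + μ j).factorial : ℝ)) -
    fprod (fun j => α j + μ j) * fprod (fun j => α j + γ j + μ j - ν j) /
        (fprod α * fprod fun j => α j + μ j - ν j) *
      (((m + n - 1 + msum fun j => α j + μ j).factorial : ℝ) *
          ((n - 1 + msum fun j => α j + μ j - ν j).factorial : ℝ) *
          ((m + n - 1 + msum fun j => α j + γ j + μ j - ν j).factorial : ℝ) /
        (((n - 1 + msum fun j => α j + μ j).factorial : ℝ) *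
          ((m + n - 1 + msum fun j => α j + μ j - ν j).factorial : ℝ) *
          ((n - 1 + msum fun j => α j + γ j + μ j - ν j).factorial : ℝ)))) *
    Real.sqrt (fprod α * ((n - 1 + msum α).factorial : ℝ) *
        ((n - 1 + msum fun j => α j + γ j + μ j - (β j + ν j)).factorial : ℝ) /
      (fprod (fun j => α j + γ j + μ j - (β j + ν j)) *
        ((m + n - 1 + msum α).factorial : ℝ) *
        ((m + n - 1 + msum fun j => α j + γ j + μ j - (β j + ν j)).factorial : ℝ)))

/-- the coefficient of Lemma 2.1 -/
def Tcoef (n m : ℕ) (β γ : Fin n → ℕ) (α : Fin n → ℕ) : ℝ :=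
  Real.sqrt (fprod α * ((n - 1 + msum α).factorial : ℝ) *
      ((n - 1 + msum fun j => α j + β j - γ j).factorial : ℝ) /
    (fprod (fun j => α j + β j - γ j) * ((m + n - 1 + msum α).factorial : ℝ) *
      ((m + n - 1 + msum fun j => α j + β j - γ j).factorial : ℝ))) *
  (fprod (fun j => α j + β j) * ((m + n - 1 + msum fun j => α j + β j).factorial : ℝ) /
    (fprod α * ((n - 1 + msum fun j => α j + β j).factorial : ℝ)))

end FockSob

section AuxAsymp
open Filter Finset FockSob

private lemma aux_lin_div (c : ℝ) :
    Tendsto (fun x : ℕ => ((x : ℝ) + c) / (x : ℝ)) atTop (nhds 1) := by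
  have h1 : Tendsto (fun x : ℕ => ((x : ℝ))⁻¹) atTop (nhds 0) :=
    tendsto_inv_atTop_nhds_zero_nat
  have h0 : Tendsto (fun x : ℕ => 1 + c * ((x : ℝ))⁻¹) atTop (nhds 1) := by
    simpa using tendsto_const_nhds.add (h1.const_mul c)
  refine Tendsto.congr' ?_ h0
  filter_upwards [eventually_ge_atTop 1] with x hx
  have hx0 : (x : ℝ) ≠ 0 := Nat.cast_ne_zero.mpr (by omega)
  field_simp

private lemma aux_fact_add (y k : ℕ) :
    (((y + k).factorial : ℝ)) = (y.factorial : ℝ) * ∏ i ∈ Finset.range k, ((y : ℝ) + 1 + i) := by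
  induction k with
  | zero => simp
  | succ k ih =>
    have h : y + (k + 1) = (y + k) + 1 := by omega
    rw [h, Finset.prod_range_succ]
    push_cast [Nat.factorial_succ]
    rw [ih]
    ring

private lemma aux_ratio_fact (a k : ℕ) :
    Tendsto
      (fun x : ℕ => (((a + x) + k).factorial : ℝ) / (((a + x).factorial : ℝ) * (x : ℝ) ^ k))
      atTop (nhds 1) := by
  have hterm : ∀ i ∈ Finset.range k,
      Tendsto (fun x : ℕ => ((x : ℝ) + ((a : ℝ) + 1 + i)) / (x : ℝ)) atTop (nhds 1) :=
    fun i _ => aux_lin_div _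
  have hprod := tendsto_finset_prod (Finset.range k) hterm
  rw [Finset.prod_const_one] at hprod
  refine Tendsto.congr' ?_ hprod
  filter_upwards [eventually_ge_atTop 1] with x hx
  have hx0 : (x : ℝ) ≠ 0 := Nat.cast_ne_zero.mpr (by omega)
  have hF : ((a + x).factorial : ℝ) ≠ 0 := by positivity
  rw [aux_fact_add (a + x) k]
  rw [Finset.prod_div_distrib, Finset.prod_const, Finset.card_range]
  rw [mul_div_mul_left _ _ hF]
  congr 1
  exact Finset.prod_congr rfl fun i _ => by push_cast; ring

private lemma aux_q_tendsto (n m : ℕ) (hn : 1 ≤ n) :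
    Tendsto
      (fun s : ℕ => ((m + n - 1 + s).factorial : ℝ) / (((n - 1 + s).factorial : ℝ) * (s : ℝ) ^ m))
      atTop (nhds 1) := by
  refine (aux_ratio_fact (n - 1) m).congr fun s => ?_
  rw [show ((n - 1) + s) + m = m + n - 1 + s from by omega]

private lemma aux_sqrt_prod {ι : Type*} (s : Finset ι) (f : ι → ℝ) (h : ∀ i ∈ s, 0 ≤ f i) :
    Real.sqrt (∏ i ∈ s, f i) = ∏ i ∈ s, Real.sqrt (f i) := by
  induction s using Finset.cons_induction with
  | empty => simp
  | cons a t ha ih =>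
    rw [Finset.prod_cons, Finset.prod_cons, Real.sqrt_mul (h a (Finset.mem_cons_self a t)),
      ih fun i hi => h i (Finset.mem_cons.mpr (Or.inr hi))]

private lemma aux_key (a b c d e f g h i Pb Pc S1 S2 S3 : ℝ)
    (ha : 0 < a) (hb : 0 < b) (hc : 0 < c) (hd : 0 < d) (he : 0 < e) (hf : 0 < f)
    (hg : 0 < g) (hh : 0 < h) (hi : 0 < i) (hPb : 0 < Pb) (hPc : 0 < Pc)
    (hS1 : 0 < S1) (hS2 : 0 < S2) (hS3 : 0 < S3) :
    Real.sqrt (a * b * c / (d * e * f)) * (g * h / (a * i)) / Real.sqrt (Pb * Pc) =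
      Real.sqrt ((g / (a * Pb)) * (g / (d * Pc)) *
        ((h / (i * S3)) ^ 2 / ((e / (b * S1)) * (f / (c * S2))) * (S3 / S1) * (S3 / S2))) := by
  have hE : (g / (a * Pb)) * (g / (d * Pc)) *
        ((h / (i * S3)) ^ 2 / ((e / (b * S1)) * (f / (c * S2))) * (S3 / S1) * (S3 / S2))
      = (a * b * c / (d * e * f)) * (g * h / (a * i)) ^ 2 / (Pb * Pc) := by
    field_simp
  rw [hE]
  rw [Real.sqrt_div (by positivity : (0:ℝ) ≤ a * b * c / (d * e * f) * (g * h / (a * i)) ^ 2)]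
  rw [Real.sqrt_mul (by positivity : (0:ℝ) ≤ a * b * c / (d * e * f))]
  rw [Real.sqrt_sq (by positivity : (0:ℝ) ≤ g * h / (a * i))]

open FockSob

private noncomputable def auxq (n m : ℕ) (s : ℕ) : ℝ :=
  ((m + n - 1 + s).factorial : ℝ) / (((n - 1 + s).factorial : ℝ) * (s : ℝ) ^ m)

private noncomputable def auxE (n m : ℕ) (β γ : Fin n → ℕ) (α : Fin n → ℕ) : ℝ :=
  (∏ j, ((α j + β j).factorial : ℝ) / (((α j).factorial : ℝ) * (α j : ℝ) ^ β j)) *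
  (∏ j, ((α j + β j).factorial : ℝ) / (((α j + β j - γ j).factorial : ℝ) * (α j : ℝ) ^ γ j)) *
  ((auxq n m (msum fun j => α j + β j)) ^ 2 /
      (auxq n m (msum α) * auxq n m (msum fun j => α j + β j - γ j)) *
    (((msum fun j => α j + β j : ℕ) : ℝ) / ((msum α : ℕ) : ℝ)) ^ m *
    (((msum fun j => α j + β j : ℕ) : ℝ) / ((msum fun j => α j + β j - γ j : ℕ) : ℝ)) ^ m)

private lemma aux_E_tendsto (n m : ℕ) (hn : 1 ≤ n) (β γ : Fin n → ℕ) :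
    Tendsto (auxE n m β γ) atTop (nhds 1) := by
  have j0 : Fin n := ⟨0, hn⟩
  have hev : ∀ j : Fin n, Tendsto (fun α : Fin n → ℕ => α j) atTop atTop := fun j =>
    tendsto_atTop_atTop.2 fun b => ⟨fun _ => b, fun α hα => hα j⟩
  have hevsub : ∀ j : Fin n, Tendsto (fun α : Fin n → ℕ => α j - γ j) atTop atTop := fun j =>
    tendsto_atTop_atTop.2 fun b => ⟨fun _ => b + γ j, fun α hα => by have h' : b + γ j ≤ α j := hα j; omega⟩
  have hs1 : Tendsto (fun α : Fin n → ℕ => msum α) atTop atTop :=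
    tendsto_atTop_atTop.2 fun b => ⟨fun _ => b, fun α hα =>
      le_trans (hα j0) (Finset.single_le_sum (f := fun j => α j)
        (fun _ _ => Nat.zero_le _) (Finset.mem_univ j0))⟩
  have hs2 : Tendsto (fun α : Fin n → ℕ => msum fun j => α j + β j - γ j) atTop atTop :=
    tendsto_atTop_atTop.2 fun b => ⟨fun k => b + γ k, fun α hα => by
      have h' : b + γ j0 ≤ α j0 := hα j0
      have h1 : b ≤ α j0 + β j0 - γ j0 := by omega
      exact le_trans h1 (Finset.single_le_sum (f := fun j => α j + β j - γ j)
        (fun _ _ => Nat.zero_le _) (Finset.mem_univ j0))⟩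
  have hs3 : Tendsto (fun α : Fin n → ℕ => msum fun j => α j + β j) atTop atTop :=
    tendsto_atTop_atTop.2 fun b => ⟨fun _ => b, fun α hα => by
      have h' : b ≤ α j0 := hα j0
      have h1 : b ≤ α j0 + β j0 := by omega
      exact le_trans h1 (Finset.single_le_sum (f := fun j => α j + β j)
        (fun _ _ => Nat.zero_le _) (Finset.mem_univ j0))⟩
  have hE1 : ∀ j : Fin n, Tendsto (fun α : Fin n → ℕ =>
      ((α j + β j).factorial : ℝ) / (((α j).factorial : ℝ) * (α j : ℝ) ^ β j))
      atTop (nhds 1) := by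
    intro j
    refine ((aux_ratio_fact 0 (β j)).comp (hev j)).congr fun α => ?_
    simp [Function.comp, Nat.zero_add]
  have hE2 : ∀ j : Fin n, Tendsto (fun α : Fin n → ℕ =>
      ((α j + β j).factorial : ℝ) / (((α j + β j - γ j).factorial : ℝ) * (α j : ℝ) ^ γ j))
      atTop (nhds 1) := by
    intro j
    have h1 := (aux_ratio_fact (β j) (γ j)).comp (hevsub j)
    have h2 := ((aux_lin_div (-(γ j : ℝ))).comp (hev j)).pow (γ j)
    have h := h1.mul h2
    rw [one_pow, one_mul] at h
    refine Tendsto.congr' ?_ h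
    filter_upwards [eventually_ge_atTop (fun k => γ k + 1)] with α hα
    have hαj : γ j + 1 ≤ α j := hα j
    simp only [Function.comp_apply]
    rw [show (β j + (α j - γ j)) + γ j = α j + β j from by omega,
      show β j + (α j - γ j) = α j + β j - γ j from by omega,
      Nat.cast_sub (by omega : γ j ≤ α j)]
    have hu : (0:ℝ) < (α j : ℝ) - γ j := by
      have : (γ j : ℝ) + 1 ≤ (α j : ℝ) := by exact_mod_cast hαj
      linarith
    have hx : (0:ℝ) < (α j : ℝ) := by exact_mod_cast (by omega : 0 < α j)
    rw [show (α j : ℝ) + -(γ j : ℝ) = (α j : ℝ) - γ j from by ring, div_pow]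
    field_simp
  have hq := aux_q_tendsto n m hn
  have t3 := ((hq.comp hs3).pow 2).div ((hq.comp hs1).mul (hq.comp hs2)) (by norm_num)
  have tB : Tendsto (fun α : Fin n → ℕ =>
      (((msum fun j => α j + β j : ℕ) : ℝ) / ((msum α : ℕ) : ℝ)) ^ m) atTop (nhds 1) := by
    have h := ((aux_lin_div ((msum β : ℕ) : ℝ)).comp hs1).pow m
    rw [one_pow] at h
    refine h.congr fun α => ?_
    simp only [Function.comp_apply]
    have hsum : (msum fun j => α j + β j) = msum α + msum β := by
      simp [msum, Finset.sum_add_distrib]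
    rw [hsum]
    norm_cast
  have tC : Tendsto (fun α : Fin n → ℕ =>
      (((msum fun j => α j + β j : ℕ) : ℝ) / ((msum fun j => α j + β j - γ j : ℕ) : ℝ)) ^ m)
      atTop (nhds 1) := by
    have h := ((aux_lin_div ((msum γ : ℕ) : ℝ)).comp hs2).pow m
    rw [one_pow] at h
    refine Tendsto.congr' ?_ h
    filter_upwards [eventually_ge_atTop (fun k => γ k)] with α hα
    simp only [Function.comp_apply]
    have hsum : (msum fun j => α j + β j) = (msum fun j => α j + β j - γ j) + msum γ := by
      simp only [msum, ← Finset.sum_add_distrib]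
      exact Finset.sum_congr rfl fun j _ => by have h' : γ j ≤ α j := hα j; omega
    rw [hsum]
    norm_cast
  have hP1 := tendsto_finset_prod (Finset.univ : Finset (Fin n)) (fun j _ => hE1 j)
  have hP2 := tendsto_finset_prod (Finset.univ : Finset (Fin n)) (fun j _ => hE2 j)
  rw [Finset.prod_const_one] at hP1 hP2
  have hfinal := (hP1.mul hP2).mul ((t3.mul tB).mul tC)
  rw [show ((1:ℝ) * 1) * ((1 ^ 2 / (1 * 1) * 1) * 1) = 1 from by norm_num] at hfinal
  exact hfinal

end AuxAsymp


open FockSob in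
theorem toeplitz_coefficient_asymptotics (n m : ℕ) (hn : 1 ≤ n) (β γ : Fin n → ℕ) :
    ∃ C : ℝ, 0 < C ∧
      Filter.Tendsto
        (fun α : Fin n → ℕ =>
          Tcoef n m β γ α / ∏ j, (α j : ℝ) ^ (((β j + γ j : ℕ) : ℝ) / 2))
        Filter.atTop (nhds C) := by
  have j0 : Fin n := ⟨0, hn⟩
  have hB : ∀ᶠ α : Fin n → ℕ in atTop,
      Tcoef n m β γ α / ∏ j, (α j : ℝ) ^ (((β j + γ j : ℕ) : ℝ) / 2)
        = Real.sqrt (auxE n m β γ α) := by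
    filter_upwards [eventually_ge_atTop (fun k => γ k + 1)] with α hα
    have hαj : ∀ j, γ j + 1 ≤ α j := fun j => hα j
    have hx : ∀ j, (0:ℝ) < (α j : ℝ) := fun j => by
      exact_mod_cast (by have := hαj j; omega : 0 < α j)
    have hs1p : 0 < msum α :=
      Finset.sum_pos (fun j _ => by have := hαj j; omega) ⟨j0, Finset.mem_univ j0⟩
    have hs2p : 0 < msum fun j => α j + β j - γ j :=
      Finset.sum_pos (fun j _ => by have := hαj j; omega) ⟨j0, Finset.mem_univ j0⟩
    have hs3p : 0 < msum fun j => α j + β j :=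
      Finset.sum_pos (fun j _ => by have := hαj j; omega) ⟨j0, Finset.mem_univ j0⟩
    have hfp : ∀ v : Fin n → ℕ, (0:ℝ) < fprod v := fun v =>
      Finset.prod_pos fun j _ => by exact_mod_cast Nat.factorial_pos _
    have hden : (∏ j, (α j : ℝ) ^ (((β j + γ j : ℕ) : ℝ) / 2))
        = Real.sqrt ((∏ j, (α j : ℝ) ^ β j) * (∏ j, (α j : ℝ) ^ γ j)) := by
      rw [← Finset.prod_mul_distrib, aux_sqrt_prod _ _ (fun j _ => by positivity)]
      refine Finset.prod_congr rfl fun j _ => ?_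
      rw [← pow_add]
      rw [show (((β j + γ j : ℕ) : ℝ) / 2) = ((β j + γ j : ℕ) : ℝ) * (1/2) from by ring,
        Real.rpow_mul (le_of_lt (hx j)), Real.rpow_natCast, ← Real.sqrt_eq_rpow]
    rw [hden]
    simp only [Tcoef]
    rw [aux_key (fprod α)
        ((n - 1 + msum α).factorial : ℝ)
        ((n - 1 + msum fun j => α j + β j - γ j).factorial : ℝ)
        (fprod fun j => α j + β j - γ j)
        ((m + n - 1 + msum α).factorial : ℝ)
        ((m + n - 1 + msum fun j => α j + β j - γ j).factorial : ℝ)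
        (fprod fun j => α j + β j)
        ((m + n - 1 + msum fun j => α j + β j).factorial : ℝ)
        ((n - 1 + msum fun j => α j + β j).factorial : ℝ)
        (∏ j, (α j : ℝ) ^ β j) (∏ j, (α j : ℝ) ^ γ j)
        (((msum α : ℕ) : ℝ) ^ m)
        (((msum fun j => α j + β j - γ j : ℕ) : ℝ) ^ m)
        (((msum fun j => α j + β j : ℕ) : ℝ) ^ m)
        (hfp _) (by exact_mod_cast Nat.factorial_pos _) (by exact_mod_cast Nat.factorial_pos _)
        (hfp _) (by exact_mod_cast Nat.factorial_pos _) (by exact_mod_cast Nat.factorial_pos _)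
        (hfp _) (by exact_mod_cast Nat.factorial_pos _) (by exact_mod_cast Nat.factorial_pos _)
        (Finset.prod_pos fun j _ => pow_pos (hx j) _)
        (Finset.prod_pos fun j _ => pow_pos (hx j) _)
        (pow_pos (by exact_mod_cast hs1p) _) (pow_pos (by exact_mod_cast hs2p) _)
        (pow_pos (by exact_mod_cast hs3p) _)]
    congr 1
    simp only [auxE, auxq, fprod, Finset.prod_div_distrib, Finset.prod_mul_distrib, div_pow]
  refine ⟨1, one_pos, ?_⟩
  have h := (aux_E_tendsto n m hn β γ).sqrt
  rw [Real.sqrt_one] at h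
  exact Tendsto.congr' (hB.mono fun α hα => hα.symm) h
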